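/- Let x : [0,∞) → [0,∞) be differentiable with x'(t) ≤ C(x(t)² + 1) for all t, and suppose for some ε ∈ (0,1] and t₀ > 0 that ∫_t^{t+2√ε} x(s) ds ≤ ε for all t ≥ t₀. Then for all t₁ ≥ t₀ and t₂ ∈ [t₁, t₁ + 2√ε], x(t₂) ≤ e^{Cε}(x(t₁) + 2C√ε). -/

import Mathlib

open MeasureTheory Filter Topology Real

/-- Gronwall step: if `x' ≤ C(x² + 1)` and `∫_t^{t+2√ε} x ≤ ε` for `t ≥ t₀`, then for
`t₁ ≥ t₀` and `t₂ ∈ [t₁, t₁ + 2√ε]` one has `x(t₂) ≤ e^{Cε}(x(t₁) + 2C√ε)`. -/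
theorem stmt5 (x x' : ℝ → ℝ) (C ε t₀ : ℝ) (hC : 0 < C)
    (hε : ε ∈ Set.Ioc (0:ℝ) 1) (ht₀ : 0 < t₀)
    (hxnonneg : ∀ t, 0 ≤ t → 0 ≤ x t)
    (hderiv : ∀ t, 0 ≤ t → HasDerivAt x (x' t) t)
    (hineq : ∀ t, 0 ≤ t → x' t ≤ C * (x t ^ 2 + 1))
    (hwin : ∀ t, t₀ ≤ t → ∫ s in t..(t + 2 * Real.sqrt ε), x s ≤ ε) :
    ∀ t₁, t₀ ≤ t₁ → ∀ t₂ ∈ Set.Icc t₁ (t₁ + 2 * Real.sqrt ε),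
      x t₂ ≤ Real.exp (C * ε) * (x t₁ + 2 * C * Real.sqrt ε) := by
  intro t₁ ht₁ t₂ ht₂
  obtain ⟨h12, h2b⟩ := ht₂
  have hsq : 0 < Real.sqrt ε := Real.sqrt_pos.mpr hε.1
  have ht₁0 : 0 < t₁ := lt_of_lt_of_le ht₀ ht₁
  -- continuity of x
  have hxcontOn : ContinuousOn x (Set.Ici 0) := fun t ht =>
    ((hderiv t ht).continuousAt).continuousWithinAt
  have hxint : ∀ a b : ℝ, 0 ≤ a → 0 ≤ b → IntervalIntegrable x volume a b := by
    intro a b ha hb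
    apply (hxcontOn.mono ?_).intervalIntegrable
    intro t ht
    rcases Set.mem_uIcc.mp ht with ⟨h, _⟩ | ⟨h, _⟩ <;> exact le_trans (by assumption) h
  set F : ℝ → ℝ := fun t => ∫ u in t₁..t, x u with hFdef
  have hF : ∀ t, 0 < t → HasDerivAt F (x t) t := by
    intro t ht
    exact intervalIntegral.integral_hasDerivAt_right (hxint t₁ t ht₁0.le ht.le)
      (ContinuousAt.stronglyMeasurableAtFilter isOpen_Ioi
        (fun u hu => (hderiv u (le_of_lt hu)).continuousAt) t ht)
      (hderiv t ht.le).continuousAt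
  set G : ℝ → ℝ := fun t => Real.exp (-(C * F t)) with hGdef
  have hGpos : ∀ t, 0 < G t := fun t => Real.exp_pos _
  have hG : ∀ t, 0 < t → HasDerivAt G (-(C * x t) * G t) t := by
    intro t ht
    have h1 : HasDerivAt (fun t => -(C * F t)) (-(C * x t)) t := ((hF t ht).const_mul C).neg
    have := h1.exp
    simpa [hGdef, mul_comm] using this
  have hGcontAt : ∀ t, 0 < t → ContinuousAt G t := fun t ht => (hG t ht).continuousAt
  have hGcontOn : ContinuousOn G (Set.Icc t₁ (t₁ + 2 * Real.sqrt ε)) := fun t ht =>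
    (hGcontAt t (lt_of_lt_of_le ht₁0 ht.1)).continuousWithinAt
  have hGint : ∀ b, t₁ ≤ b → b ≤ t₁ + 2 * Real.sqrt ε → IntervalIntegrable G volume t₁ b := by
    intro b hb hb2
    apply (hGcontOn.mono ?_).intervalIntegrable
    rw [Set.uIcc_of_le hb]
    exact Set.Icc_subset_Icc le_rfl hb2
  set I : ℝ → ℝ := fun t => ∫ u in t₁..t, G u with hIdef
  have hI : ∀ t, t₁ ≤ t → t ≤ t₁ + 2 * Real.sqrt ε → HasDerivAt I (G t) t := by
    intro t ht ht2
    exact intervalIntegral.integral_hasDerivAt_right (hGint t ht ht2)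
      (ContinuousAt.stronglyMeasurableAtFilter isOpen_Ioi
        (fun u hu => hGcontAt u hu) t (lt_of_lt_of_le ht₁0 ht))
      (hGcontAt t (lt_of_lt_of_le ht₁0 ht))
  set H : ℝ → ℝ := fun t => G t * x t - C * I t with hHdef
  have hH : ∀ t, t₁ ≤ t → t ≤ t₁ + 2 * Real.sqrt ε →
      HasDerivAt H (G t * (x' t - C * x t ^ 2 - C)) t := by
    intro t ht ht2
    have ht0 : (0:ℝ) < t := lt_of_lt_of_le ht₁0 ht
    have h1 := ((hG t ht0).mul (hderiv t ht0.le)).sub ((hI t ht ht2).const_mul C)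
    exact h1.congr_deriv (by ring)
  -- H is antitone on [t₁, t₂]
  have hmono : AntitoneOn H (Set.Icc t₁ t₂) := by
    apply antitoneOn_of_deriv_nonpos (convex_Icc t₁ t₂)
    · intro t ht
      exact (hH t ht.1 (ht.2.trans h2b)).continuousAt.continuousWithinAt
    · intro t ht
      rw [interior_Icc] at ht
      exact (hH t ht.1.le (ht.2.le.trans h2b)).differentiableAt.differentiableWithinAt
    · intro t ht
      rw [interior_Icc] at ht
      have ht0 : (0:ℝ) < t := lt_of_lt_of_le ht₁0 ht.1.le
      rw [(hH t ht.1.le (ht.2.le.trans h2b)).deriv]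
      apply mul_nonpos_of_nonneg_of_nonpos (hGpos t).le
      have := hineq t ht0.le
      nlinarith
  have hkey : H t₂ ≤ H t₁ := hmono ⟨le_rfl, h12⟩ ⟨h12, le_rfl⟩ h12
  have hHt₁ : H t₁ = x t₁ := by
    simp [hHdef, hGdef, hIdef, hFdef, intervalIntegral.integral_same]
  -- F is nonneg and ≤ ε on [t₁, t₂]
  have hFnonneg : ∀ t, t₁ ≤ t → 0 ≤ F t := by
    intro t ht
    apply intervalIntegral.integral_nonneg ht
    intro u hu
    exact hxnonneg u (le_trans ht₁0.le hu.1)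
  have hFt₂ : F t₂ ≤ ε := by
    have hsplit : F t₂ + (∫ u in t₂..(t₁ + 2 * Real.sqrt ε), x u)
        = ∫ u in t₁..(t₁ + 2 * Real.sqrt ε), x u := by
      apply intervalIntegral.integral_add_adjacent_intervals
      · exact hxint t₁ t₂ ht₁0.le (ht₁0.trans_le h12).le
      · exact hxint t₂ _ (ht₁0.trans_le h12).le (by positivity)
    have htail : 0 ≤ ∫ u in t₂..(t₁ + 2 * Real.sqrt ε), x u := by
      apply intervalIntegral.integral_nonneg h2b
      intro u hu
      exact hxnonneg u (le_trans (ht₁0.trans_le h12).le hu.1)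
    have := hwin t₁ ht₁
    linarith [hsplit ▸ this]
  -- G ≤ 1 on [t₁, ∞)
  have hGle1 : ∀ t, t₁ ≤ t → G t ≤ 1 := by
    intro t ht
    rw [hGdef]
    simp only
    rw [show (1:ℝ) = Real.exp 0 by simp]
    apply Real.exp_le_exp.mpr
    have := hFnonneg t ht
    nlinarith
  -- bound the integral of G
  have hIle : I t₂ ≤ t₂ - t₁ := by
    have : I t₂ ≤ ∫ _ in t₁..t₂, (1:ℝ) := by
      apply intervalIntegral.integral_mono_on h12 (hGint t₂ h12 h2b) intervalIntegrable_const
      intro u hu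
      exact hGle1 u hu.1
    simpa using this
  have hmain : G t₂ * x t₂ ≤ x t₁ + C * (t₂ - t₁) := by
    have h1 : G t₂ * x t₂ - C * I t₂ ≤ x t₁ := hHt₁ ▸ hkey
    nlinarith
  -- unfold G and conclude
  have hG₂ : G t₂ = Real.exp (-(C * F t₂)) := rfl
  have hx₂ : x t₂ ≤ Real.exp (C * F t₂) * (x t₁ + C * (t₂ - t₁)) := by
    have hGpos₂ := hGpos t₂
    have : x t₂ = Real.exp (C * F t₂) * (G t₂ * x t₂) := by
      rw [hG₂, ← mul_assoc, ← Real.exp_add]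
      simp
    rw [this]
    exact mul_le_mul_of_nonneg_left hmain (Real.exp_pos _).le
  have hexp : Real.exp (C * F t₂) ≤ Real.exp (C * ε) :=
    Real.exp_le_exp.mpr (by nlinarith)
  have hlin : x t₁ + C * (t₂ - t₁) ≤ x t₁ + 2 * C * Real.sqrt ε := by nlinarith
  calc x t₂ ≤ Real.exp (C * F t₂) * (x t₁ + C * (t₂ - t₁)) := hx₂
    _ ≤ Real.exp (C * ε) * (x t₁ + 2 * C * Real.sqrt ε) := by
        apply mul_le_mul hexp hlin ?_ (Real.exp_pos _).le
        have := hxnonneg t₁ ht₁0.le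
        nlinarith
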